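/- Let (U, 𝒮) be a laminar set system, let A and B be two disjoint subsets of U, and let S and S′ be two sets of non-singleton members of 𝒮. If the bi-colouring (A, B) identifies both S and S′, then S = S′. -/
import Mathlib


variable {α : Type*} [DecidableEq α] [Fintype α]

/-- A set system on the finite universe `α`: `∅ ∉ 𝒮`, `univ ∈ 𝒮`, all singletons in `𝒮`. -/
def IsSetSystem (𝒮 : Finset (Finset α)) : Prop :=
  (∅ : Finset α) ∉ 𝒮 ∧ Finset.univ ∈ 𝒮 ∧ ∀ a : α, ({a} : Finset α) ∈ 𝒮

/-- Two sets overlap: non-disjoint and neither contains the other. -/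
def Overlap (X Y : Finset α) : Prop :=
  (X ∩ Y).Nonempty ∧ ¬ X ⊆ Y ∧ ¬ Y ⊆ X

/-- A set system is laminar when no two members overlap. -/
def IsLaminar (𝒮 : Finset (Finset α)) : Prop :=
  ∀ X ∈ 𝒮, ∀ Y ∈ 𝒮, ¬ Overlap X Y

/-- `c` is a child of `x` in the laminar tree: a ⊆-maximal proper subset of `x` in `𝒮`. -/
def IsChild (𝒮 : Finset (Finset α)) (c x : Finset α) : Prop :=
  c ∈ 𝒮 ∧ c ⊂ x ∧ ∀ y ∈ 𝒮, y ⊂ x → c ⊆ y → y = c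

/-- `p` is the parent of `x`: the ⊆-minimal member of `𝒮` properly containing `x`. -/
def IsParent (𝒮 : Finset (Finset α)) (p x : Finset α) : Prop :=
  p ∈ 𝒮 ∧ x ⊂ p ∧ ∀ y ∈ 𝒮, x ⊂ y → p ⊆ y

/-- `(π, σ)` identifies `S`: a pair of injections on `S` such that each `s ∈ S` is the
⊆-minimal member of `𝒮` containing both `π s` and `σ s`. -/
def Identifies (𝒮 S : Finset (Finset α)) (π σ : Finset α → α) : Prop :=
  Set.InjOn π ↑S ∧ Set.InjOn σ ↑S ∧
  ∀ s ∈ S, π s ∈ s ∧ σ s ∈ s ∧ ∀ y ∈ 𝒮, π s ∈ y → σ s ∈ y → s ⊆ y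

/-- `x` is `s`-requested in `(π, σ)` (for `s ∈ S`): `x ⊆ s` and `π s ∈ x` or `σ s ∈ x`. -/
def Requested (S : Finset (Finset α)) (π σ : Finset α → α) (s x : Finset α) : Prop :=
  s ∈ S ∧ x ⊆ s ∧ (π s ∈ x ∨ σ s ∈ x)

/-- `(π, σ)` has unique request: every member of `𝒮` is `s`-requested for at most one `s ∈ S`. -/
def UniqueRequest (𝒮 S : Finset (Finset α)) (π σ : Finset α → α) : Prop :=
  ∀ x ∈ 𝒮, ∀ s s' : Finset α,
    Requested S π σ s x → Requested S π σ s' x → s = s'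

/-- The bi-colouring `(A, B)` (disjoint, equal cardinality) identifies `S`. -/
def BicolIdentifies (𝒮 S : Finset (Finset α)) (A B : Finset α) : Prop :=
  Disjoint A B ∧ A.card = B.card ∧
  ∃ π σ : Finset α → α, Identifies 𝒮 S π σ ∧ UniqueRequest 𝒮 S π σ ∧
    S.image π = A ∧ S.image σ = B

/-- `X` is a thin set of inner nodes: for every non-root `x ∈ X`, the parent of `x` is not
in `X` and `x` has a sibling not in `X`. -/
def Thin (𝒮 X : Finset (Finset α)) : Prop :=
  ∀ x ∈ X, x ≠ Finset.univ →
    (∀ p : Finset α, IsParent 𝒮 p x → p ∉ X) ∧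
    ∃ y p : Finset α, y ≠ x ∧ IsChild 𝒮 x p ∧ IsChild 𝒮 y p ∧ y ∉ X

set_option linter.unusedSectionVars false in
lemma count_eq (𝒮 : Finset (Finset α)) (hlam : IsLaminar 𝒮)
    (A B : Finset α) (hdisj : Disjoint A B)
    (S : Finset (Finset α)) (hS : ∀ s ∈ S, s ∈ 𝒮)
    (π σ : Finset α → α) (hid : Identifies 𝒮 S π σ) (hur : UniqueRequest 𝒮 S π σ)
    (hA : S.image π = A) (hB : S.image σ = B)
    (x : Finset α) (hx : x ∈ 𝒮) :
    (S.filter (fun s => s ⊆ x)).card = (x ∩ (A ∪ B)).card / 2 := by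
  obtain ⟨hπ, hσ, hmin⟩ := hid
  set T := S.filter (fun s => s ⊆ x) with hT
  have hTsub : T ⊆ S := Finset.filter_subset _ _
  have hTA : T.image π ⊆ x ∩ A := by
    intro a ha
    obtain ⟨s, hs, rfl⟩ := Finset.mem_image.1 ha
    have hsS := hTsub hs
    have hsx : s ⊆ x := (Finset.mem_filter.1 hs).2
    exact Finset.mem_inter.2 ⟨hsx (hmin s hsS).1, hA ▸ Finset.mem_image_of_mem π hsS⟩
  have hTB : T.image σ ⊆ x ∩ B := by
    intro a ha
    obtain ⟨s, hs, rfl⟩ := Finset.mem_image.1 ha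
    have hsS := hTsub hs
    have hsx : s ⊆ x := (Finset.mem_filter.1 hs).2
    exact Finset.mem_inter.2 ⟨hsx (hmin s hsS).2.1, hB ▸ Finset.mem_image_of_mem σ hsS⟩
  have cardTA : (T.image π).card = T.card :=
    Finset.card_image_of_injOn (hπ.mono (by exact_mod_cast hTsub))
  have cardTB : (T.image σ).card = T.card :=
    Finset.card_image_of_injOn (hσ.mono (by exact_mod_cast hTsub))
  set RA := (x ∩ A) \ T.image π with hRA
  set RB := (x ∩ B) \ T.image σ with hRB
  have hxAcard : (x ∩ A).card = RA.card + T.card := by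
    rw [← cardTA, hRA]
    exact (Finset.card_sdiff_add_card_eq_card hTA).symm
  have hxBcard : (x ∩ B).card = RB.card + T.card := by
    rw [← cardTB, hRB]
    exact (Finset.card_sdiff_add_card_eq_card hTB).symm
  -- each element of RA/RB gives a request on x from some s with ¬ s ⊆ x
  have claimA : ∀ u ∈ RA, ∃ s, s ∈ S ∧ ¬ s ⊆ x ∧ Requested S π σ s x ∧ π s = u := by
    intro u hu
    obtain ⟨huxA, hunim⟩ := Finset.mem_sdiff.1 hu
    obtain ⟨hux, huA⟩ := Finset.mem_inter.1 huxA
    obtain ⟨s, hs, rfl⟩ := Finset.mem_image.1 (hA ▸ huA)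
    have hnsx : ¬ s ⊆ x := by
      intro h
      exact hunim (Finset.mem_image_of_mem π (Finset.mem_filter.2 ⟨hs, h⟩))
    have hxs : x ⊆ s := by
      by_contra hxs
      exact hlam x hx s (hS s hs)
        ⟨⟨π s, Finset.mem_inter.2 ⟨hux, (hmin s hs).1⟩⟩, hxs, hnsx⟩
    exact ⟨s, hs, hnsx, ⟨hs, hxs, Or.inl hux⟩, rfl⟩
  have claimB : ∀ u ∈ RB, ∃ s, s ∈ S ∧ ¬ s ⊆ x ∧ Requested S π σ s x ∧ σ s = u := by
    intro u hu
    obtain ⟨huxB, hunim⟩ := Finset.mem_sdiff.1 hu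
    obtain ⟨hux, huB⟩ := Finset.mem_inter.1 huxB
    obtain ⟨s, hs, rfl⟩ := Finset.mem_image.1 (hB ▸ huB)
    have hnsx : ¬ s ⊆ x := by
      intro h
      exact hunim (Finset.mem_image_of_mem σ (Finset.mem_filter.2 ⟨hs, h⟩))
    have hxs : x ⊆ s := by
      by_contra hxs
      exact hlam x hx s (hS s hs)
        ⟨⟨σ s, Finset.mem_inter.2 ⟨hux, (hmin s hs).2.1⟩⟩, hxs, hnsx⟩
    exact ⟨s, hs, hnsx, ⟨hs, hxs, Or.inr hux⟩, rfl⟩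
  have hRcard : (RA ∪ RB).card ≤ 1 := by
    rw [Finset.card_le_one]
    intro u hu v hv
    rcases Finset.mem_union.1 hu with hu' | hu' <;>
      rcases Finset.mem_union.1 hv with hv' | hv'
    · obtain ⟨s, hs, hns, hreq, hpu⟩ := claimA u hu'
      obtain ⟨t, ht, hnt, hreq', hpv⟩ := claimA v hv'
      have := hur x hx s t hreq hreq'
      rw [← hpu, ← hpv, this]
    · obtain ⟨s, hs, hns, hreq, hpu⟩ := claimA u hu'
      obtain ⟨t, ht, hnt, hreq', hpv⟩ := claimB v hv'
      have hst := hur x hx s t hreq hreq'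
      subst hst
      have hux : π s ∈ x := hpu ▸ (Finset.mem_inter.1 (Finset.mem_sdiff.1 hu').1).1
      have hvx : σ s ∈ x := hpv ▸ (Finset.mem_inter.1 (Finset.mem_sdiff.1 hv').1).1
      exact absurd ((hmin s hs).2.2 x hx hux hvx) hns
    · obtain ⟨s, hs, hns, hreq, hpu⟩ := claimB u hu'
      obtain ⟨t, ht, hnt, hreq', hpv⟩ := claimA v hv'
      have hst := hur x hx s t hreq hreq'
      subst hst
      have hux : σ s ∈ x := hpu ▸ (Finset.mem_inter.1 (Finset.mem_sdiff.1 hu').1).1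
      have hvx : π s ∈ x := hpv ▸ (Finset.mem_inter.1 (Finset.mem_sdiff.1 hv').1).1
      exact absurd ((hmin s hs).2.2 x hx hvx hux) hns
    · obtain ⟨s, hs, hns, hreq, hpu⟩ := claimB u hu'
      obtain ⟨t, ht, hnt, hreq', hpv⟩ := claimB v hv'
      have := hur x hx s t hreq hreq'
      rw [← hpu, ← hpv, this]
  have hRdisj : Disjoint RA RB :=
    Disjoint.mono (Finset.sdiff_subset.trans Finset.inter_subset_right)
      (Finset.sdiff_subset.trans Finset.inter_subset_right) hdisj
  have hRsum : RA.card + RB.card ≤ 1 := by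
    rw [← Finset.card_union_of_disjoint hRdisj]; exact hRcard
  have hsplit : x ∩ (A ∪ B) = (x ∩ A) ∪ (x ∩ B) := Finset.inter_union_distrib_left x A B
  have hABdisj : Disjoint (x ∩ A) (x ∩ B) :=
    Disjoint.mono Finset.inter_subset_right Finset.inter_subset_right hdisj
  rw [hsplit, Finset.card_union_of_disjoint hABdisj, hxAcard, hxBcard]
  omega

/-- A bi-colouring identifies at most one set of inner nodes. -/
theorem stmt_10 (𝒮 : Finset (Finset α)) (hsys : IsSetSystem 𝒮) (hlam : IsLaminar 𝒮)
    (A B : Finset α) (hdisj : Disjoint A B)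
    (S S' : Finset (Finset α))
    (hS : ∀ x ∈ S, x ∈ 𝒮 ∧ ∀ a : α, x ≠ {a})
    (hS' : ∀ x ∈ S', x ∈ 𝒮 ∧ ∀ a : α, x ≠ {a})
    (h1 : BicolIdentifies 𝒮 S A B) (h2 : BicolIdentifies 𝒮 S' A B) :
    S = S' := by
  classical
  obtain ⟨_, _, π, σ, hid, hur, hA, hB⟩ := h1
  obtain ⟨_, _, π', σ', hid', hur', hA', hB'⟩ := h2
  have key1 := count_eq 𝒮 hlam A B hdisj S (fun s hs => (hS s hs).1) π σ hid hur hA hB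
  have key2 := count_eq 𝒮 hlam A B hdisj S' (fun s hs => (hS' s hs).1) π' σ' hid' hur' hA' hB'
  have split : ∀ (T : Finset (Finset α)) (x : Finset α),
      (T.filter (fun s => s ⊆ x)).card =
        (T.filter (fun s => s ⊂ x)).card + (if x ∈ T then 1 else 0) := by
    intro T x
    have heq : T.filter (fun s => s ⊆ x) =
        T.filter (fun s => s ⊂ x) ∪ T.filter (fun s => s = x) := by
      ext s
      simp only [Finset.mem_filter, Finset.mem_union]
      constructor
      · rintro ⟨h1, h2⟩
        rcases eq_or_ne s x with h | h
        · exact Or.inr ⟨h1, h⟩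
        · exact Or.inl ⟨h1, ssubset_of_subset_of_ne h2 h⟩
      · rintro (⟨h1, h2⟩ | ⟨h1, h2⟩)
        · exact ⟨h1, h2.subset⟩
        · exact ⟨h1, h2 ▸ subset_rfl⟩
    have hd : Disjoint (T.filter (fun s => s ⊂ x)) (T.filter (fun s => s = x)) := by
      rw [Finset.disjoint_left]
      intro s hs hs'
      obtain ⟨-, h1⟩ := Finset.mem_filter.1 hs
      obtain ⟨-, rfl⟩ := Finset.mem_filter.1 hs'
      exact absurd rfl h1.ne
    rw [heq, Finset.card_union_of_disjoint hd, Finset.filter_eq']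
    congr 1
    by_cases hxT : x ∈ T <;> simp [hxT]
  have main : ∀ n : ℕ, ∀ x ∈ 𝒮, x.card = n → (x ∈ S ↔ x ∈ S') := by
    intro n
    induction n using Nat.strong_induction_on with
    | _ n ih =>
      intro x hx hcard
      have hfeq : S.filter (fun s => s ⊂ x) = S'.filter (fun s => s ⊂ x) := by
        ext s
        simp only [Finset.mem_filter]
        constructor
        · rintro ⟨hs, hsx⟩
          exact ⟨(ih s.card (hcard ▸ Finset.card_lt_card hsx) s (hS s hs).1 rfl).1 hs, hsx⟩
        · rintro ⟨hs, hsx⟩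
          exact ⟨(ih s.card (hcard ▸ Finset.card_lt_card hsx) s (hS' s hs).1 rfl).2 hs, hsx⟩
      have e1 := key1 x hx
      have e2 := key2 x hx
      rw [split S x] at e1
      rw [split S' x] at e2
      rw [hfeq] at e1
      by_cases h1 : x ∈ S <;> by_cases h2 : x ∈ S' <;> simp [h1, h2] at e1 e2 ⊢ <;> omega
  ext s
  constructor
  · intro h
    exact (main s.card s (hS s h).1 rfl).1 h
  · intro h
    exact (main s.card s (hS' s h).1 rfl).2 h
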